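/- Fix k, let ζ̃ ≥ 1 and set T = N·ζ̃ in the user-rate lower bound R_k(ρ) = log₂(1 + ((1−ρ)·β_k²·γ₀·ξ·N/S) / ((1−ρ)·ξ·γ₀·β_k·ζ̃·(∑_{j≠k} β_j)/S + ρ·β_k·γ₀ + 1)). Then for every ρ ∈ [0,1), R_k is differentiable in ρ and ∂R_k/∂ρ = − β_k²·γ₀·ξ·N·(1 + β_k·γ₀)·S / ( ln2 · (Υ·β_k·γ₀ + S) · (Ψ·β_k·γ₀ + S) ), where Υ = (1−ρ)·(N·β_k + ζ̃·∑_{j≠k} β_j)·ξ + ρ·S and Ψ = ρ·S + (1−ρ)·ξ·ζ̃·∑_{j≠k} β_j. -/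

import Mathlib

/-- with `T = N·ζ̃`, the user-rate lower bound
`R_k(ρ) = log₂(1 + ((1−ρ)β_k²γ₀ξN/S)/((1−ρ)ξγ₀β_kζ̃Sj/S + ρβ_kγ₀ + 1))` is differentiable
in the DAC distortion `ρ` on `[0,1)` with derivative
`−β_k²γ₀ξN(1+β_kγ₀)S / (ln2·(Υβ_kγ₀+S)·(Ψβ_kγ₀+S))` where
`Υ = (1−ρ)(Nβ_k + ζ̃Sj)ξ + ρS` and `Ψ = ρS + (1−ρ)ξζ̃Sj`. -/
theorem stmt_12 (K : ℕ) (hK : 0 < K) (β : Fin K → ℝ) (hβ : ∀ i, 0 < β i) (k : Fin K)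
    (N γ₀ ξ ζt : ℝ) (hN : 0 < N) (hγ₀ : 0 < γ₀) (hξ : ξ ∈ Set.Ioc (0 : ℝ) 1)
    (hζt : 1 ≤ ζt)
    (S Sj : ℝ) (hS : S = ∑ i, β i) (hSj : Sj = ∑ j ∈ Finset.univ.erase k, β j)
    (Rk : ℝ → ℝ)
    (hRk : ∀ ρ : ℝ, Rk ρ = Real.logb 2 (1 +
      ((1 - ρ) * (β k) ^ 2 * γ₀ * ξ * N / S) /
        ((1 - ρ) * ξ * γ₀ * (β k) * ζt * Sj / S + ρ * (β k) * γ₀ + 1))) :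
    ∀ ρ ∈ Set.Ico (0 : ℝ) 1,
      HasDerivAt Rk
        (-((β k) ^ 2 * γ₀ * ξ * N * (1 + (β k) * γ₀) * S /
          (Real.log 2 *
            (((1 - ρ) * (N * (β k) + ζt * Sj) * ξ + ρ * S) * (β k) * γ₀ + S) *
            ((ρ * S + (1 - ρ) * ξ * ζt * Sj) * (β k) * γ₀ + S)))) ρ := by
  intro ρ hρ
  obtain ⟨hρ0, hρ1⟩ := hρ
  have hbk : 0 < β k := hβ k
  have hξ0 : 0 < ξ := hξ.1
  have hζ0 : 0 < ζt := by linarith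
  have hSpos : 0 < S := by
    rw [hS]; exact Finset.sum_pos (fun i _ => hβ i) ⟨k, Finset.mem_univ k⟩
  have hSjnn : 0 ≤ Sj := by
    rw [hSj]; exact Finset.sum_nonneg fun j _ => (hβ j).le
  have h1ρ : 0 < 1 - ρ := by linarith
  have hd : 0 < (1 - ρ) * ξ * γ₀ * (β k) * ζt * Sj / S + ρ * (β k) * γ₀ + 1 := by positivity
  have hf : 0 < 1 + ((1 - ρ) * (β k) ^ 2 * γ₀ * ξ * N / S) /
      ((1 - ρ) * ξ * γ₀ * (β k) * ζt * Sj / S + ρ * (β k) * γ₀ + 1) := by positivity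
  have hlog2 : (0 : ℝ) < Real.log 2 := Real.log_pos (by norm_num)
  have hU : 0 < ((1 - ρ) * (N * (β k) + ζt * Sj) * ξ + ρ * S) * (β k) * γ₀ + S := by positivity
  have hP : 0 < (ρ * S + (1 - ρ) * ξ * ζt * Sj) * (β k) * γ₀ + S := by positivity
  have h1 : HasDerivAt (fun x : ℝ => 1 - x) (-1) ρ := (hasDerivAt_id ρ).const_sub 1
  have Hnum : HasDerivAt (fun x : ℝ => (1 - x) * (β k) ^ 2 * γ₀ * ξ * N / S)
      ((-1) * (β k) ^ 2 * γ₀ * ξ * N / S) ρ :=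
    ((((h1.mul_const ((β k) ^ 2)).mul_const γ₀).mul_const ξ).mul_const N).div_const S
  have Hden : HasDerivAt
      (fun x : ℝ => (1 - x) * ξ * γ₀ * (β k) * ζt * Sj / S + x * (β k) * γ₀ + 1)
      ((-1) * ξ * γ₀ * (β k) * ζt * Sj / S + 1 * (β k) * γ₀) ρ :=
    ((((((h1.mul_const ξ).mul_const γ₀).mul_const (β k)).mul_const ζt).mul_const Sj).div_const
      S).add (((hasDerivAt_id ρ).mul_const (β k)).mul_const γ₀) |>.add_const 1
  have Hq := Hnum.div Hden hd.ne'
  have Hf := Hq.const_add 1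
  have Hlog := Hf.log hf.ne'
  have Hlogb := Hlog.div_const (Real.log 2)
  have hRkeq : Rk = fun x : ℝ => Real.log (1 +
      ((1 - x) * (β k) ^ 2 * γ₀ * ξ * N / S) /
        ((1 - x) * ξ * γ₀ * (β k) * ζt * Sj / S + x * (β k) * γ₀ + 1)) / Real.log 2 := by
    funext x; rw [hRk x, Real.logb]
  rw [hRkeq]
  refine HasDerivAt.congr_deriv (by exact Hlogb) ?_
  have e1 := hSpos.ne'
  have e2 := hd.ne'
  have e3 := hf.ne'
  have e4 := hlog2.ne'
  have e5 := hU.ne'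
  have e6 := hP.ne'
  simp only [Pi.div_apply]
  field_simp
  ring
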